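/- (Minimum residual characterization of DPG.) Let U_h ⊆ U be a finite-dimensional subspace and l : V → ℂ a bounded antilinear functional. For w ∈ U, let ψ(w) ∈ V denote the Riesz representative of the residual, i.e., the unique element with (ψ(w), v)_V = l(v) − b(w, v) for all v ∈ V. Then u_h ∈ U_h minimizes w_h ↦ ‖ψ(w_h)‖_V² over U_h if and only if (ψ(u_h), T w_h)_V = 0 for all w_h ∈ U_h, which holds if and only if b(u_h, T w_h) = l(T w_h) for all w_h ∈ U_h (i.e., u_h is the DPG solution with optimal test functions). -/

import Mathlib

/-- (Minimum residual characterization of DPG.) Let `U_h ⊆ U` be a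
finite-dimensional subspace and `l : V → ℂ` a bounded antilinear functional. For `w ∈ U`
let `ψ(w) ∈ V` be the Riesz representative of the residual, i.e. `(ψ(w), v)_V = l(v) −
b(w, v)` for all `v ∈ V`. Then `u_h ∈ U_h` minimizes `w_h ↦ ‖ψ(w_h)‖_V²` over `U_h` iff
`(ψ(u_h), T w_h)_V = 0` for all `w_h ∈ U_h`, which holds iff `b(u_h, T w_h) = l(T w_h)`
for all `w_h ∈ U_h` (i.e. `u_h` is the DPG solution with optimal test functions). Here `T`
is the trial-to-test operator, `(Tu, v)_V = b(u, v)` for all `v ∈ V`; the inner product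
`(w, v)_V`, linear in the first slot, is `⟪v, w⟫_ℂ` in Mathlib's convention. -/
theorem dpg_minimum_residual_characterization
    {U V : Type*}
    [NormedAddCommGroup U] [InnerProductSpace ℂ U] [CompleteSpace U]
    [NormedAddCommGroup V] [InnerProductSpace ℂ V] [CompleteSpace V]
    (b : U →ₗ[ℂ] V →ₗ⋆[ℂ] ℂ)
    (M : ℝ) (hM : 0 < M)
    (hb : ∀ (u : U) (v : V), ‖b u v‖ ≤ M * ‖u‖ * ‖v‖)
    (T : U → V) (hT : ∀ (u : U) (v : V), (inner ℂ v (T u) : ℂ) = b u v)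
    (Uh : Submodule ℂ U) [FiniteDimensional ℂ Uh]
    (l : V →L⋆[ℂ] ℂ)
    (ψ : U → V) (hψ : ∀ (w : U) (v : V), (inner ℂ v (ψ w) : ℂ) = l v - b w v)
    (uh : U) (huh : uh ∈ Uh) :
    ((∀ w ∈ Uh, ‖ψ uh‖ ^ 2 ≤ ‖ψ w‖ ^ 2) ↔
        (∀ w ∈ Uh, (inner ℂ (T w) (ψ uh) : ℂ) = 0)) ∧
    ((∀ w ∈ Uh, (inner ℂ (T w) (ψ uh) : ℂ) = 0) ↔
        (∀ w ∈ Uh, b uh (T w) = l (T w))) := by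
  classical
  -- ψ is affine: ψ (uh - c • d) = ψ uh + c • T d
  have key : ∀ (c : ℂ) (d : U), ψ (uh - c • d) = ψ uh + c • T d := by
    intro c d
    apply ext_inner_left ℂ
    intro v
    rw [hψ, inner_add_right, inner_smul_right, hψ, hT]
    have : b (uh - c • d) v = b uh v - c * b d v := by
      simp [map_sub, map_smul]
    rw [this]
    ring
  have h2 : (∀ w ∈ Uh, (inner ℂ (T w) (ψ uh) : ℂ) = 0) ↔
      (∀ w ∈ Uh, b uh (T w) = l (T w)) := by
    constructor
    · intro h w hw
      have h0 := hψ uh (T w)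
      rw [h w hw] at h0
      have := h0.symm
      rw [sub_eq_zero] at this
      exact this.symm
    · intro h w hw
      rw [hψ uh (T w), h w hw, sub_self]
  refine ⟨?_, h2⟩
  constructor
  · -- minimization implies orthogonality
    intro hmin d hd
    suffices hmain : (inner ℂ (ψ uh) (T d) : ℂ) = 0 by
      rw [← inner_conj_symm, hmain, map_zero]
    set β : ℂ := inner ℂ (ψ uh) (T d) with hβ
    by_contra hne
    set t : ℝ := (‖T d‖ ^ 2 + 1)⁻¹ with ht
    have htpos : 0 < t := by positivity
    set c : ℂ := -(t : ℂ) * star β with hc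
    have hw : uh - c • d ∈ Uh := Uh.sub_mem huh (Uh.smul_mem c hd)
    have hle := hmin _ hw
    rw [key c d] at hle
    have hexp : ‖ψ uh + c • T d‖ ^ 2
        = ‖ψ uh‖ ^ 2 + 2 * RCLike.re (inner ℂ (ψ uh) (c • T d) : ℂ) + ‖c • T d‖ ^ 2 :=
      norm_add_sq (𝕜 := ℂ) _ _
    have hre : RCLike.re (inner ℂ (ψ uh) (c • T d) : ℂ) = -t * Complex.normSq β := by
      rw [inner_smul_right, ← hβ, hc]
      have : -(t : ℂ) * star β * β = -(t : ℂ) * (Complex.normSq β : ℂ) := by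
        rw [mul_assoc]
        congr 1
        rw [Complex.star_def, ← Complex.normSq_eq_conj_mul_self]
      rw [this]
      simp
    have hnc : ‖c‖ = t * ‖β‖ := by
      rw [hc]
      simp [norm_mul, abs_of_pos htpos]
    have hns : ‖c • T d‖ ^ 2 = t ^ 2 * ‖β‖ ^ 2 * ‖T d‖ ^ 2 := by
      rw [norm_smul, hnc]; ring
    have hβn : Complex.normSq β = ‖β‖ ^ 2 := by
      rw [Complex.normSq_eq_norm_sq]
    rw [hexp, hre, hns, hβn] at hle
    have hβpos : 0 < ‖β‖ := norm_pos_iff.mpr hne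
    have htd : t * ‖T d‖ ^ 2 < 1 := by
      rw [ht]
      rw [inv_mul_lt_iff₀ (by positivity)]
      linarith
    nlinarith [sq_nonneg (‖T d‖), sq_nonneg (‖β‖), mul_pos htpos (mul_pos hβpos hβpos)]
  · -- orthogonality implies minimization
    intro horth w hw
    have hd : uh - w ∈ Uh := Uh.sub_mem huh hw
    have hfo : ψ w = ψ uh + T (uh - w) := by
      have := key 1 (uh - w)
      simpa using this
    rw [hfo, norm_add_sq (𝕜 := ℂ)]
    have hre : RCLike.re (inner ℂ (ψ uh) (T (uh - w)) : ℂ) = 0 := by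
      have h0 := horth _ hd
      rw [← inner_conj_symm] at h0
      have : (inner ℂ (ψ uh) (T (uh - w)) : ℂ) = 0 := by
        have := congrArg (starRingEnd ℂ) h0
        simpa using this
      rw [this]; simp
    rw [hre]
    nlinarith [sq_nonneg (‖T (uh - w)‖)]
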